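/- arXiv:1512.08779 — 3 statements merged into one kernel-verified Lean document; each statement's English description precedes it below -/
import Mathlib

section
/- Let H, H' ≥ 2 be integers and let ν₁, μ₁ be integers with 2 − H' ≤ ν₁ − μ₁ ≤ H − 2. Then ∑_{a=0}^{H'−2} (−1)^a q^{a(a+1)/2} q^{(H+a)ν₁+(H'−a−1)μ₁} / ((q)_{H+a−1}(q)_{H'−a−2}) = ∑_{b=0}^{H−2} (−1)^b q^{b(b+1)/2} q^{(H−b−1)ν₁+(H'+b)μ₁} / ((q)_{H−b−2}(q)_{H'+b−1}) holds as an identity of rational functions in q. -/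
open scoped Classical

noncomputable section

/-- The finite q-Pochhammer `(q)_k = ∏_{s=1}^k (1 - q^s)` as a rational function in `q`. -/
def poch (k : ℕ) : RatFunc ℚ := ∏ s ∈ Finset.Icc 1 k, (1 - RatFunc.X ^ s)

lemma one_sub_X_pow_ne_zero (s : ℕ) (hs : 1 ≤ s) :
    (1 - RatFunc.X ^ s : RatFunc ℚ) ≠ 0 := by
  intro h
  have h1 : (RatFunc.X : RatFunc ℚ) ^ s = 1 := by
    exact (sub_eq_zero.mp h).symm
  rw [← RatFunc.algebraMap_X (K := ℚ), ← map_pow, ← map_one (algebraMap (Polynomial ℚ) (RatFunc ℚ))] at h1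
  have h2 := RatFunc.algebraMap_injective ℚ h1
  have := congrArg Polynomial.natDegree h2
  simp [Polynomial.natDegree_X_pow] at this
  omega

lemma poch_ne_zero (k : ℕ) : poch k ≠ 0 := by
  unfold poch
  exact Finset.prod_ne_zero_iff.2 fun s hs => one_sub_X_pow_ne_zero s (Finset.mem_Icc.1 hs).1

lemma poch_succ (k : ℕ) : poch (k+1) = poch k * (1 - RatFunc.X ^ (k+1)) := by
  unfold poch
  rw [Finset.prod_Icc_succ_top (by omega)]

lemma poch_zero : poch 0 = 1 := by simp [poch]

def eps (k : ℕ) (t : ℤ) : ℤ := ((k:ℤ) * ((k:ℤ) - 1)) / 2 + (k:ℤ) * t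

def f (N : ℕ) (t : ℤ) (k : ℕ) : RatFunc ℚ :=
  (-1) ^ k * RatFunc.X ^ (eps k t) / (poch k * poch (N - k))

lemma X_zpow_ne_zero (e : ℤ) : (RatFunc.X : RatFunc ℚ) ^ e ≠ 0 :=
  zpow_ne_zero e RatFunc.X_ne_zero

lemma half_succ (k : ℕ) : ((k:ℤ)+1)*(((k:ℤ)+1)-1)/2 = (k:ℤ)*((k:ℤ)-1)/2 + k := by
  obtain ⟨m, hm⟩ := Int.even_mul_succ_self ((k:ℤ)-1)
  have h1 : (k:ℤ)*((k:ℤ)-1) = 2*m := by linarith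
  have h2 : ((k:ℤ)+1)*(((k:ℤ)+1)-1) = 2*(m+(k:ℤ)) := by linarith
  rw [h1, h2, Int.mul_ediv_cancel_left _ two_ne_zero, Int.mul_ediv_cancel_left _ two_ne_zero]

lemma eps_succ (k : ℕ) (t : ℤ) : eps (k+1) t = eps k (t+1) + t := by
  unfold eps
  push_cast
  rw [half_succ]
  ring

lemma eps_shift (k : ℕ) (t : ℤ) : eps k (t+1) = eps k t + k := by
  unfold eps; ring

lemma rec_step (N : ℕ) (t : ℤ) :
    ∑ k ∈ Finset.range (N+2), (1 - RatFunc.X ^ (N+1)) * f (N+1) t k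
      = (1 - RatFunc.X ^ t) * ∑ k ∈ Finset.range (N+1), f N (t+1) k := by
  classical
  set P : ℕ → RatFunc ℚ := fun k => if k ≤ N then f N (t+1) k else 0 with hP
  set R : ℕ → RatFunc ℚ := fun k =>
    if k = 0 then 0 else -(RatFunc.X ^ t * f N (t+1) (k-1)) with hR
  have hterm : ∀ k ∈ Finset.range (N+2),
      (1 - RatFunc.X ^ (N+1)) * f (N+1) t k = P k + R k := by
    intro k hk
    rw [Finset.mem_range] at hk
    rcases Nat.eq_zero_or_pos k with hk0 | hk1
    · subst hk0
      simp only [hP, hR, if_pos (Nat.zero_le N), if_pos rfl, add_zero]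
      unfold f
      have e0 : ∀ s : ℤ, (RatFunc.X : RatFunc ℚ) ^ (eps 0 s) = 1 := by
        intro s; norm_num [eps]
      simp only [Nat.sub_zero, pow_zero, one_mul, e0]
      rw [poch_succ, poch_zero]
      have n1 := poch_ne_zero N
      have n3 := one_sub_X_pow_ne_zero (N+1) (by omega)
      field_simp
    · have eR : ∀ j, RatFunc.X ^ t * f N (t+1) j
          = (-1)^j * RatFunc.X ^ (eps (j+1) t) / (poch j * poch (N - j)) := by
        intro j
        unfold f
        rw [← (by rw [eps_succ, zpow_add₀ RatFunc.X_ne_zero]; ring :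
          (RatFunc.X : RatFunc ℚ) ^ t * RatFunc.X ^ (eps j (t+1)) = RatFunc.X ^ (eps (j+1) t))]
        ring
      rcases Nat.lt_or_ge k (N+1) with hkN | hkN
      · -- middle case: 1 ≤ k ≤ N
        obtain ⟨j, rfl⟩ : ∃ j, k = j + 1 := ⟨k - 1, by omega⟩
        have hjN : j + 1 ≤ N := by omega
        simp only [hP, hR, if_pos hjN, if_neg (Nat.succ_ne_zero j), Nat.add_sub_cancel]
        rw [eR j]
        unfold f
        have e1 : (RatFunc.X : RatFunc ℚ) ^ (eps (j+1) (t+1)) =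
            RatFunc.X ^ (eps (j+1) t) * RatFunc.X ^ (j+1 : ℕ) := by
          rw [eps_shift, zpow_add₀ RatFunc.X_ne_zero]
          norm_cast
        rw [e1]
        have d1 : N + 1 - (j+1) = (N - (j+1)) + 1 := by omega
        have d2 : N - j = (N - (j+1)) + 1 := by omega
        rw [d1, d2, poch_succ (N - (j+1)), poch_succ j]
        rw [show (RatFunc.X : RatFunc ℚ) ^ (N+1)
            = RatFunc.X ^ (j+1) * RatFunc.X ^ ((N - (j+1)) + 1) from by
          rw [← pow_add]; congr 1; omega]
        have n1 := poch_ne_zero j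
        have n2 := poch_ne_zero (N - (j+1))
        have n3 := one_sub_X_pow_ne_zero (j+1) (by omega)
        have n4 := one_sub_X_pow_ne_zero ((N - (j+1)) + 1) (by omega)
        set u : RatFunc ℚ := RatFunc.X ^ (j+1) with hu
        set v : RatFunc ℚ := RatFunc.X ^ ((N - (j+1)) + 1) with hv
        set Z : RatFunc ℚ := RatFunc.X ^ (eps (j+1) t) with hZ
        set p : RatFunc ℚ := poch j with hp
        set r : RatFunc ℚ := poch (N - (j+1)) with hrr
        rw [pow_succ]
        field_simp
        ring
      · -- top case: k = N+1
        have hk : k = N + 1 := by omega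
        subst hk
        simp only [hP, hR, if_neg (by omega : ¬ (N+1 ≤ N)), if_neg (Nat.succ_ne_zero N),
          Nat.add_sub_cancel, zero_add]
        rw [eR N]
        unfold f
        have d1 : N + 1 - (N+1) = 0 := by omega
        have d2 : N - N = 0 := by omega
        rw [d1, d2, poch_zero, poch_succ N]
        have n1 := poch_ne_zero N
        have n3 := one_sub_X_pow_ne_zero (N+1) (by omega)
        set w : RatFunc ℚ := RatFunc.X ^ (N+1) with hw
        set Z : RatFunc ℚ := RatFunc.X ^ (eps (N+1) t) with hZ
        set p : RatFunc ℚ := poch N with hp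
        rw [pow_succ]
        field_simp
  rw [Finset.sum_congr rfl hterm, Finset.sum_add_distrib]
  have hPsum : ∑ k ∈ Finset.range (N+2), P k = ∑ k ∈ Finset.range (N+1), f N (t+1) k := by
    rw [Finset.sum_range_succ]
    simp only [hP, if_neg (by omega : ¬ (N+1 ≤ N)), add_zero]
    exact Finset.sum_congr rfl fun k hk => if_pos (by simpa using Nat.lt_succ_iff.mp (Finset.mem_range.mp hk))
  have hRsum : ∑ k ∈ Finset.range (N+2), R k
      = ∑ k ∈ Finset.range (N+1), -(RatFunc.X ^ t * f N (t+1) k) := by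
    rw [Finset.sum_range_succ']
    simp only [hR, if_pos rfl, add_zero]
    exact Finset.sum_congr rfl fun k hk => by simp
  rw [hPsum, hRsum, sub_mul, one_mul, Finset.mul_sum]
  rw [Finset.sum_neg_distrib]
  ring

lemma key_vanish (N : ℕ) : ∀ t : ℤ, 1 - (N:ℤ) ≤ t → t ≤ 0 →
    ∑ k ∈ Finset.range (N+1), f N t k = 0 := by
  induction N with
  | zero => intro t h1 h2; omega
  | succ N ih =>
    intro t h1 h2
    have hr := rec_step N t
    have hnz : (1 - RatFunc.X ^ (N+1) : RatFunc ℚ) ≠ 0 := one_sub_X_pow_ne_zero (N+1) (by omega)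
    rcases eq_or_lt_of_le h2 with h0 | hlt
    · rw [h0] at hr ⊢
      rw [zpow_zero, sub_self, zero_mul] at hr
      rw [← Finset.mul_sum] at hr
      exact (mul_eq_zero.mp hr).resolve_left hnz
    · have := ih (t+1) (by push_cast at h1 ⊢; omega) (by omega)
      rw [this, mul_zero, ← Finset.mul_sum] at hr
      exact (mul_eq_zero.mp hr).resolve_left hnz

lemma even_prod (n : ℤ) : ∃ m, n * (n + 1) = 2 * m := by
  obtain ⟨m, hm⟩ := Int.even_mul_succ_self n
  exact ⟨m, by linarith⟩

lemma expoL (x y ν μ a : ℤ) :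
    ((x-1)*(x-2)/2 + (1-x)*(ν-μ) + x*ν + (y-1)*μ) +
      (((x-1+a) * ((x-1+a) - 1))/2 + (x-1+a)*(ν-μ+2-x))
      = a*(a+1)/2 + (x+a)*ν + (y-a-1)*μ := by
  obtain ⟨m1, hm1⟩ := even_prod a
  obtain ⟨m2, hm2'⟩ := even_prod (x-2)
  obtain ⟨m3, hm3'⟩ := even_prod (x-2+a)
  have hm2 : (x-1)*(x-2) = 2*m2 := by linear_combination hm2'
  have hm3 : (x-1+a) * ((x-1+a) - 1) = 2*m3 := by linear_combination hm3'
  rw [hm1, hm2, hm3, Int.mul_ediv_cancel_left _ (by norm_num),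
    Int.mul_ediv_cancel_left _ (by norm_num), Int.mul_ediv_cancel_left _ (by norm_num)]
  apply mul_left_cancel₀ (show (2:ℤ) ≠ 0 by norm_num)
  linear_combination hm1 - hm2 - hm3

lemma expoR (x y ν μ b : ℤ) :
    ((x-1)*(x-2)/2 + (1-x)*(ν-μ) + x*ν + (y-1)*μ) +
      (((x-2-b) * ((x-2-b) - 1))/2 + (x-2-b)*(ν-μ+2-x))
      = b*(b+1)/2 + (x-b-1)*ν + (y+b)*μ := by
  obtain ⟨m1, hm1⟩ := even_prod b
  obtain ⟨m2, hm2'⟩ := even_prod (x-2)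
  obtain ⟨m3, hm3'⟩ := even_prod (x-3-b)
  have hm2 : (x-1)*(x-2) = 2*m2 := by linear_combination hm2'
  have hm3 : (x-2-b) * ((x-2-b) - 1) = 2*m3 := by linear_combination hm3'
  rw [hm1, hm2, hm3, Int.mul_ediv_cancel_left _ (by norm_num),
    Int.mul_ediv_cancel_left _ (by norm_num), Int.mul_ediv_cancel_left _ (by norm_num)]
  apply mul_left_cancel₀ (show (2:ℤ) ≠ 0 by norm_num)
  linear_combination hm1 - hm2 - hm3

/-- **Lemma (two Brion vertex sums agree).** For `n = m = 1` the expressions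
`S^{(H,H')}_𝔬(q)` and `S^{(H,H')}_𝔬'(q)` coincide when `2 - H' ≤ ν₁ - μ₁ ≤ H - 2`. -/
theorem brion_sums_agree (H H' : ℕ) (hH : 2 ≤ H) (hH' : 2 ≤ H') (ν₁ μ₁ : ℤ)
    (h1 : 2 - (H' : ℤ) ≤ ν₁ - μ₁) (h2 : ν₁ - μ₁ ≤ (H : ℤ) - 2) :
    (∑ a ∈ Finset.range (H' - 1),
        (-1 : RatFunc ℚ) ^ a *
          RatFunc.X ^ (((a : ℤ) * ((a : ℤ) + 1)) / 2 + ((H : ℤ) + a) * ν₁ +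
            ((H' : ℤ) - a - 1) * μ₁) /
          (poch (H + a - 1) * poch (H' - a - 2))) =
      ∑ b ∈ Finset.range (H - 1),
        (-1 : RatFunc ℚ) ^ b *
          RatFunc.X ^ (((b : ℤ) * ((b : ℤ) + 1)) / 2 + ((H : ℤ) - b - 1) * ν₁ +
            ((H' : ℤ) + b) * μ₁) /
          (poch (H - b - 2) * poch (H' + b - 1)) := by
  classical
  set N : ℕ := H + H' - 3 with hN
  set t : ℤ := ν₁ - μ₁ + 2 - H with ht
  set C : ℤ := ((H:ℤ)-1)*((H:ℤ)-2)/2 + (1-(H:ℤ))*(ν₁-μ₁) + (H:ℤ)*ν₁ + ((H':ℤ)-1)*μ₁ with hC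
  set G : ℕ → RatFunc ℚ := fun k => ((-1:RatFunc ℚ)^(H-1) * RatFunc.X ^ C) * f N t k with hG
  -- total vanishing
  have hvan : ∑ k ∈ Finset.range (N+1), G k = 0 := by
    rw [hG, ← Finset.mul_sum, key_vanish N t (by omega) (by omega), mul_zero]
  -- LHS as a segment
  have hL : (∑ a ∈ Finset.range (H' - 1),
        (-1 : RatFunc ℚ) ^ a *
          RatFunc.X ^ (((a : ℤ) * ((a : ℤ) + 1)) / 2 + ((H : ℤ) + a) * ν₁ +
            ((H' : ℤ) - a - 1) * μ₁) /
          (poch (H + a - 1) * poch (H' - a - 2)))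
      = ∑ a ∈ Finset.range (H' - 1), G (H - 1 + a) := by
    refine Finset.sum_congr rfl fun a ha => ?_
    rw [Finset.mem_range] at ha
    have hd1 : H + a - 1 = H - 1 + a := by omega
    have hd2 : H' - a - 2 = N - (H - 1 + a) := by omega
    have hsgn : ((-1:RatFunc ℚ))^(H-1) * (-1)^(H-1+a) = (-1)^a := by
      rw [← pow_add, show H-1+(H-1+a) = 2*(H-1)+a by omega, pow_add, pow_mul,
        neg_one_sq, one_pow, one_mul]
    have hexp : (RatFunc.X : RatFunc ℚ) ^
        (((a : ℤ) * ((a : ℤ) + 1)) / 2 + ((H : ℤ) + a) * ν₁ + ((H' : ℤ) - a - 1) * μ₁)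
        = RatFunc.X ^ C * RatFunc.X ^ (eps (H-1+a) t) := by
      rw [← zpow_add₀ RatFunc.X_ne_zero]
      congr 1
      have hK : ((H-1+a : ℕ):ℤ) = (H:ℤ)-1+(a:ℤ) := by omega
      rw [hC, ht, eps, hK]
      exact (expoL (H:ℤ) (H':ℤ) ν₁ μ₁ (a:ℤ)).symm
    rw [hd1, hd2, hG, hexp]
    unfold f
    rw [← hsgn]
    ring
  -- RHS as a (reflected) segment
  have hR : (∑ b ∈ Finset.range (H - 1),
        (-1 : RatFunc ℚ) ^ b *
          RatFunc.X ^ (((b : ℤ) * ((b : ℤ) + 1)) / 2 + ((H : ℤ) - b - 1) * ν₁ +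
            ((H' : ℤ) + b) * μ₁) /
          (poch (H - b - 2) * poch (H' + b - 1)))
      = ∑ b ∈ Finset.range (H - 1), -(G (H - 1 - 1 - b)) := by
    refine Finset.sum_congr rfl fun b hb => ?_
    rw [Finset.mem_range] at hb
    have hd0 : H - 1 - 1 - b = H - 2 - b := by omega
    have hd2 : H' + b - 1 = N - (H - 2 - b) := by omega
    have hsgn : ((-1:RatFunc ℚ))^(H-1) * (-1)^(H-2-b) = -((-1)^b) := by
      rw [← pow_add, show H-1+(H-2-b) = 2*(H-2-b)+(b+1) by omega, pow_add, pow_mul,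
        neg_one_sq, one_pow, one_mul, pow_succ]
      ring
    have hexp : (RatFunc.X : RatFunc ℚ) ^
        (((b : ℤ) * ((b : ℤ) + 1)) / 2 + ((H : ℤ) - b - 1) * ν₁ + ((H' : ℤ) + b) * μ₁)
        = RatFunc.X ^ C * RatFunc.X ^ (eps (H-2-b) t) := by
      rw [← zpow_add₀ RatFunc.X_ne_zero]
      congr 1
      have hK : ((H-2-b : ℕ):ℤ) = (H:ℤ)-2-(b:ℤ) := by omega
      rw [hC, ht, eps, hK]
      exact (expoR (H:ℤ) (H':ℤ) ν₁ μ₁ (b:ℤ)).symm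
    rw [hd0, hd2, show H - b - 2 = H - 2 - b from by omega, hG, hexp]
    unfold f
    have : ((-1:RatFunc ℚ))^b = -(((-1:RatFunc ℚ))^(H-1) * (-1)^(H-2-b)) := by
      rw [hsgn]; ring
    rw [this]
    ring
  rw [hL, hR]
  -- reindex LHS segment
  have hL2 : ∑ a ∈ Finset.range (H' - 1), G (H - 1 + a)
      = ∑ k ∈ Finset.Ico (H-1) (N+1), G k := by
    rw [Finset.sum_Ico_eq_sum_range, show N + 1 - (H-1) = H' - 1 by omega]
  -- reindex RHS segment
  have hR2 : ∑ b ∈ Finset.range (H - 1), G (H - 1 - 1 - b)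
      = ∑ k ∈ Finset.range (H - 1), G k := Finset.sum_range_reflect G (H-1)
  have hsplit : (∑ k ∈ Finset.Ico 0 (H-1), G k) + ∑ k ∈ Finset.Ico (H-1) (N+1), G k
      = ∑ k ∈ Finset.Ico 0 (N+1), G k :=
    Finset.sum_Ico_consecutive G (by omega) (by omega)
  rw [← Finset.range_eq_Ico, ← Finset.range_eq_Ico] at hsplit
  rw [Finset.sum_neg_distrib, hL2, hR2]
  linear_combination hsplit + hvan

end
end

section
/- Let n, m be nonnegative integers and λ a partition with λ_{n+1} ≤ m, and set r = min{t ≥ 0 : λ_{n−t} ≥ m−t} (so 0 ≤ r ≤ min(n,m)). Then: (a) for a positive integer j, λ'_j − j − (n−m) ≥ 0 if and only if 1 ≤ j ≤ m−r, where λ' is the conjugate partition; and (b) for a positive integer i, i − λ_i − (n−m) − 1 ≥ 0 if and only if i > n−r. -/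
open scoped Classical

noncomputable section

/-- The field of formal Laurent series over `ℚ`, where our variable `q` lives. -/
abbrev L : Type := LaurentSeries ℚ

/-- The variable `q`, as a Laurent series. -/
def q : L := HahnSeries.single 1 1

/-- The Euler product `(q)_∞ = ∏_{k=1}^∞ (1 - q^k)`, defined coefficientwise
(the coefficient of `q^d` is stable once the product is taken up to `k = d`). -/
def eulerPS : PowerSeries ℚ :=
  PowerSeries.mk fun d => PowerSeries.coeff d (∏ k ∈ Finset.Icc 1 d, (1 - PowerSeries.X ^ k))

/-- `(q)_∞` as a Laurent series. -/
def euler : L := HahnSeries.ofPowerSeries ℤ ℚ eulerPS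

/-- The series `∑_{a ≥ 0} (-1)^a q^{a(a+1)/2 + D a}` as a Laurent series
(its coefficients are computed by the finitely supported sums below). -/
def theta (D : ℤ) : L :=
  q ^ (-(D ^ 2)) *
    HahnSeries.ofPowerSeries ℤ ℚ (PowerSeries.mk fun d =>
      ∑' a : ℕ, if ((a : ℤ) * ((a : ℤ) + 1)) / 2 + D * a + D ^ 2 = (d : ℤ) then (-1 : ℚ) ^ a else 0)

/-- `f : ℕ → ℕ` encodes a partition `λ` (0-indexed: `f i = λ_{i+1}`): it is weakly
decreasing with finitely many nonzero parts. -/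
def IsPtn (f : ℕ → ℕ) : Prop := Antitone f ∧ ∃ N, ∀ i, N ≤ i → f i = 0

/-- `a : ℕ → ℕ → ℕ∞` (0-indexed: `a i j = a_{i+1,j+1}`) is a plane partition with a pit
at `(n+1, m+1)` and asymptotic conditions `(μ, ν, λ)`. -/
def IsPitPP (n m : ℕ) (μ ν lam : ℕ → ℕ) (a : ℕ → ℕ → ℕ∞) : Prop :=
  (∀ i j, a (i + 1) j ≤ a i j) ∧ (∀ i j, a i (j + 1) ≤ a i j) ∧
    a n m = 0 ∧
    (∀ i, ∃ J, ∀ j, J ≤ j → a i j = (ν i : ℕ∞)) ∧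
    (∀ j, ∃ I, ∀ i, I ≤ i → a i j = (μ j : ℕ∞)) ∧
    (∀ i j, a i j = ⊤ ↔ j < lam i)

/-- The weight `|a| = ∑_{i-n ≤ j-m, (i,j) ∉ λ} (a_{i,j} - ν_i)
+ ∑_{i-n > j-m, (i,j) ∉ λ} (a_{i,j} - μ_j)` of a plane partition. -/
def wt (n m : ℕ) (μ ν lam : ℕ → ℕ) (a : ℕ → ℕ → ℕ∞) : ℕ∞ :=
  ∑' p : ℕ × ℕ,
    if lam p.1 ≤ p.2 then
      (if p.1 + m ≤ p.2 + n then a p.1 p.2 - (ν p.1 : ℕ∞) else a p.1 p.2 - (μ p.2 : ℕ∞))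
    else 0

/-- The generating function `χ^{n,m}_{μ,ν,λ}(q) = ∑_a q^{|a|}` of plane partitions with a pit
at `(n+1, m+1)` and asymptotic conditions `(μ, ν, λ)`. -/
def chi (n m : ℕ) (μ ν lam : ℕ → ℕ) : L :=
  HahnSeries.ofPowerSeries ℤ ℚ (PowerSeries.mk fun d =>
    (Nat.card {a : ℕ → ℕ → ℕ∞ // IsPitPP n m μ ν lam a ∧ wt n m μ ν lam a = (d : ℕ∞)} : ℚ))

/-- `r = min {t ≥ 0 : λ_{n-t} ≥ m-t}` (with the convention `λ_0 = +∞`), the atypicality. -/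
def rAtyp (n m : ℕ) (lam : ℕ → ℕ) : ℕ := sInf {t | n ≤ t ∨ m ≤ t + lam (n - t - 1)}

lemma rAtyp_le_left (n m : ℕ) (lam : ℕ → ℕ) : rAtyp n m lam ≤ n :=
  Nat.sInf_le (Or.inl le_rfl)

lemma rAtyp_le_right (n m : ℕ) (lam : ℕ → ℕ) : rAtyp n m lam ≤ m :=
  Nat.sInf_le (Or.inr (Nat.le_add_right m _))

/-- The conjugate partition: `conj lam j = λ'_{j+1} = #{i : λ_i ≥ j+1}` (0-indexed). -/
def conj (lam : ℕ → ℕ) (j : ℕ) : ℕ := Nat.card {i : ℕ // j + 1 ≤ lam i}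

/-- `N_i = ν_i + n - i` (0-indexed `i : Fin n` stands for the math index `i+1`). -/
def Nc (n : ℕ) (ν : ℕ → ℕ) (i : Fin n) : ℤ := (ν i : ℤ) + n - ((i : ℕ) + 1)

/-- `M_j = μ_j + m - j`. -/
def Mc (m : ℕ) (μ : ℕ → ℕ) (j : Fin m) : ℤ := (μ j : ℤ) + m - ((j : ℕ) + 1)

/-- `P_i = π_i + (n-r) - i` where `π_i = λ_i - (m-r)`. -/
def Pc (n m r : ℕ) (lam : ℕ → ℕ) (i : Fin (n - r)) : ℤ :=
  ((lam i : ℤ) - ((m : ℤ) - r)) + ((n : ℤ) - r) - ((i : ℕ) + 1)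

/-- `Q_j = κ_j + (m-r) - j` where `κ_j = λ'_j - (n-r)`. -/
def Qc (n m r : ℕ) (lam : ℕ → ℕ) (j : Fin (m - r)) : ℤ :=
  ((conj lam j : ℤ) - ((n : ℤ) - r)) + ((m : ℤ) - r) - ((j : ℕ) + 1)

/-- `Δ^{m,n}_{μ,ν,λ} = ∑_{j=1}^{m-r} M_j Q_j + ∑_{i=1}^{n-r} N_i (P_i + 1)`. -/
def Δdet (n m : ℕ) (μ ν lam : ℕ → ℕ) : ℤ :=
  (∑ j : Fin (m - rAtyp n m lam),
      Mc m μ (Fin.castLE (Nat.sub_le m _) j) * Qc n m (rAtyp n m lam) lam j) +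
  (∑ i : Fin (n - rAtyp n m lam),
      Nc n ν (Fin.castLE (Nat.sub_le n _) i) * (Pc n m (rAtyp n m lam) lam i + 1))

/-- The block matrix of Theorem 1: upper-left `m × n` block
`∑_{a ≥ 0} (-1)^a q^{a(a+1)/2 + (N_j - M_i) a}`, upper-right `m × (m-r)` block `q^{-M_i Q_j}`,
lower-left `(n-r) × n` block `q^{-N_j (P_i + 1)}`, lower-right block `0`. -/
def pitMatrix (n m r : ℕ) (N : Fin n → ℤ) (M : Fin m → ℤ)
    (P : Fin (n - r) → ℤ) (Q : Fin (m - r) → ℤ) :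
    Matrix (Fin (m + (n - r))) (Fin (m + (n - r))) L := fun i j =>
  if hi : (i : ℕ) < m then
    if hj : (j : ℕ) < n then theta (N ⟨j, hj⟩ - M ⟨i, hi⟩)
    else if hj2 : (j : ℕ) - n < m - r then q ^ (-(M ⟨i, hi⟩ * Q ⟨(j : ℕ) - n, hj2⟩)) else 0
  else
    if hi2 : (i : ℕ) - m < n - r then
      if hj : (j : ℕ) < n then q ^ (-(N ⟨j, hj⟩ * (P ⟨(i : ℕ) - m, hi2⟩ + 1))) else 0
    else 0

/-- `a_E(x_1, …, x_k) = det (x_i^{E_j})`. -/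
def aDet {k : ℕ} (E : Fin k → ℤ) (x : Fin k → L) : L := Matrix.det fun i j => x i ^ E j

/-- The argument vector `(q^{A_1}, …, q^{A_r}, q^{-P_1-1}, …, q^{-P_{n-r}-1})`. -/
def xN (n r : ℕ) (P : Fin (n - r) → ℤ) (A : Fin r → ℕ) (i : Fin n) : L :=
  if h : (i : ℕ) < r then q ^ (A ⟨i, h⟩ : ℤ)
  else if h2 : (i : ℕ) - r < n - r then q ^ (-(P ⟨(i : ℕ) - r, h2⟩ + 1)) else 0

/-- The argument vector `(q^{-A_1}, …, q^{-A_r}, q^{-Q_1}, …, q^{-Q_{m-r}})`. -/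
def xM (m r : ℕ) (Q : Fin (m - r) → ℤ) (A : Fin r → ℕ) (j : Fin m) : L :=
  if h : (j : ℕ) < r then q ^ (-(A ⟨j, h⟩ : ℤ))
  else if h2 : (j : ℕ) - r < m - r then q ^ (-(Q ⟨(j : ℕ) - r, h2⟩)) else 0

/-- `L_i = λ_i - i + n - m + 1` (0-indexed `i` stands for `i+1`). -/
def Lz (n m : ℕ) (lam : ℕ → ℕ) (i : ℕ) : ℤ := (lam i : ℤ) - ((i : ℤ) + 1) + n - m + 1

/-- `Δ^{σ,τ,A}(μ,ν,λ)` of Theorem 2'. -/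
def Δboson (n m r : ℕ) (hrn : r ≤ n) (hrm : r ≤ m)
    (N : Fin n → ℤ) (M : Fin m → ℤ) (P : Fin (n - r) → ℤ) (Q : Fin (m - r) → ℤ)
    (σ : Equiv.Perm (Fin n)) (τ : Equiv.Perm (Fin m)) (A : Fin r → ℤ) : ℤ :=
  (∑ i : Fin r,
      (A i * (A i + 1) / 2 + A i * (N (σ (Fin.castLE hrn i)) - M (τ (Fin.castLE hrm i)))))
  - (∑ k : Fin (n - r), (P k + 1) *
      (N (σ ⟨r + k, by have := k.isLt; omega⟩) - N (Fin.castLE (Nat.sub_le n r) k)))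
  - (∑ k : Fin (m - r), Q k *
      (M (τ ⟨r + k, by have := k.isLt; omega⟩) - M (Fin.castLE (Nat.sub_le m r) k)))


lemma rAtyp_mem (n m : ℕ) (lam : ℕ → ℕ) :
    n ≤ rAtyp n m lam ∨ m ≤ rAtyp n m lam + lam (n - rAtyp n m lam - 1) := by
  have h : rAtyp n m lam ∈ {t | n ≤ t ∨ m ≤ t + lam (n - t - 1)} :=
    Nat.sInf_mem (⟨n, Or.inl le_rfl⟩ : Set.Nonempty {t | n ≤ t ∨ m ≤ t + lam (n - t - 1)})
  exact h

lemma rAtyp_not_lt (n m : ℕ) (lam : ℕ → ℕ) (t : ℕ) (ht : t < rAtyp n m lam) :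
    t < n ∧ t + lam (n - t - 1) < m := by
  have h := Nat.notMem_of_lt_sInf
    (s := {t | n ≤ t ∨ m ≤ t + lam (n - t - 1)}) ht
  simp only [Set.mem_setOf_eq, not_or, not_le] at h
  exact h

lemma conj_lt_iff (lam : ℕ → ℕ) (hlam : IsPtn lam) (j i : ℕ) :
    i < conj lam j ↔ j + 1 ≤ lam i := by
  obtain ⟨hmono, N, hN⟩ := hlam
  set F : Finset ℕ := (Finset.range N).filter (fun k => j + 1 ≤ lam k) with hF
  have hset : {i : ℕ | j + 1 ≤ lam i} = ↑F := by
    ext k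
    simp only [Set.mem_setOf_eq, hF, Finset.coe_filter, Finset.mem_range]
    constructor
    · intro h
      refine ⟨?_, h⟩
      by_contra hk
      push_neg at hk
      have := hN k hk
      omega
    · exact fun h => h.2
  have hcard : conj lam j = F.card := by
    have h1 : conj lam j = Set.ncard {i : ℕ | j + 1 ≤ lam i} :=
      Nat.card_coe_set_eq _
    rw [h1, hset, Set.ncard_coe_finset]
  constructor
  · intro h
    by_contra hle
    push_neg at hle
    have hsub : F ⊆ Finset.range i := by
      intro k hk
      simp only [hF, Finset.mem_filter, Finset.mem_range] at hk
      simp only [Finset.mem_range]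
      by_contra hik
      push_neg at hik
      have := hmono hik
      omega
    have := Finset.card_le_card hsub
    simp only [Finset.card_range] at this
    omega
  · intro h
    have hsub : Finset.range (i + 1) ⊆ F := by
      intro k hk
      simp only [Finset.mem_range] at hk
      have hk' : k ≤ i := by omega
      have hki : lam i ≤ lam k := hmono hk'
      simp only [hF, Finset.mem_filter, Finset.mem_range]
      constructor
      · by_contra hkN
        push_neg at hkN
        have := hN k hkN
        omega
      · omega
    have := Finset.card_le_card hsub
    simp only [Finset.card_range] at this
    omega

lemma part3_aux (n m : ℕ) (lam : ℕ → ℕ) (hlam : IsPtn lam) (hpit : lam n ≤ m) (i : ℕ) :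
    lam i + n ≤ i + m ↔ n - rAtyp n m lam ≤ i := by
  obtain ⟨hmono, N, hN⟩ := hlam
  have hrn := rAtyp_le_left n m lam
  have hrm := rAtyp_le_right n m lam
  constructor
  · intro h
    by_contra hi
    push_neg at hi
    have hrltn : rAtyp n m lam < n := by omega
    have hm : m ≤ rAtyp n m lam + lam (n - rAtyp n m lam - 1) := by
      rcases rAtyp_mem n m lam with h' | h'
      · omega
      · exact h'
    have hmono' : lam (n - rAtyp n m lam - 1) ≤ lam i := hmono (by omega)
    omega
  · intro hi
    by_cases hin : n ≤ i
    · have : lam i ≤ lam n := hmono hin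
      omega
    · push_neg at hin
      have ht := rAtyp_not_lt n m lam (n - 1 - i) (by omega)
      have harg : n - (n - 1 - i) - 1 = i := by omega
      rw [harg] at ht
      omega

/-- **Lemma (range of nonnegativity and atypicality).** -/
theorem conj_nonneg_iff (n m : ℕ) (lam : ℕ → ℕ) (hlam : IsPtn lam) (hpit : lam n ≤ m) :
    rAtyp n m lam ≤ min n m ∧
    (∀ j : ℕ, 0 ≤ (conj lam j : ℤ) - ((j : ℤ) + 1) - ((n : ℤ) - m) ↔
      j + 1 ≤ m - rAtyp n m lam) ∧
    (∀ i : ℕ, 0 ≤ ((i : ℤ) + 1) - (lam i : ℤ) - ((n : ℤ) - m) - 1 ↔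
      n - rAtyp n m lam < i + 1) := by
  have hrn := rAtyp_le_left n m lam
  have hrm := rAtyp_le_right n m lam
  have h3 := part3_aux n m lam hlam hpit
  have hc := conj_lt_iff lam hlam
  refine ⟨le_min hrn hrm, ?_, ?_⟩
  · intro j
    constructor
    · intro h
      by_contra hj
      push_neg at hj
      have him : (j + n - m) + m = j + n := by omega
      have h1 : lam (j + n - m) + n ≤ (j + n - m) + m := (h3 (j + n - m)).2 (by omega)
      have h2 : ¬ ((j + n - m) < conj lam j) := by
        rw [hc j (j + n - m)]
        omega
      omega
    · intro hj
      by_cases hnm : j + 1 + n ≤ m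
      · omega
      · push_neg at hnm
        have him : (j + n - m) + m = j + n := by omega
        have h1 : ¬ (lam (j + n - m) + n ≤ (j + n - m) + m) := by
          rw [h3 (j + n - m)]
          omega
        have h2 : (j + n - m) < conj lam j := (hc j (j + n - m)).mpr (by omega)
        omega
  · intro i
    have := h3 i
    omega

end
end

section
/- Let λ be a partition with at most n parts, H > λ_1 + n − 1, and σ ∈ S_n. Decompose the skew diagram (H^n) − λ into ribbons K_1, …, K_n, where K_i is the ribbon added at step σ(i) of the following process: at step k (k = 1,…,n) the particle of the current particle set located at λ_{σ^{-1}(k)} − σ^{-1}(k) jumps to position H − k (initially the particle set is {λ_t − t : t ≥ 1}). Number the boxes of K_i by 1, 2, …, h_i from its bottom-left box to its top-right box. Then for 1 ≤ s ≤ h_i − 1, the box numbered s+1 of K_i is the upper neighbor of the box numbered s if and only if there exists j with j < i, σ(j) > σ(i), and s = λ_j − j − λ_i + i. -/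
open scoped Classical

noncomputable section

/-- The particle set after step `k` of the jump process: particles `λ_t - t` for indices
`t` that have not yet jumped (those with `σ(t) > k`, and all `t > n`), together with the
landed particles `H - 1, …, H - k`. -/
def Pstep (n H : ℕ) (lam : ℕ → ℕ) (σ : Equiv.Perm (Fin n)) (k : ℕ) : Set ℤ :=
  {z | (∃ t : ℕ, z = (lam t : ℤ) - ((t : ℤ) + 1) ∧ ∀ h : t < n, k < (σ ⟨t, h⟩ : ℕ) + 1) ∨
       (∃ j : ℕ, j < k ∧ z = (H : ℤ) - ((j : ℤ) + 1))}

/-- The Young diagram associated with a particle set `P`: the (0-indexed) cell `(i, j)`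
belongs to it iff `P` has at least `i+1` elements `≥ (j+1) - (i+1)`. -/
def diagOf (P : Set ℤ) : Set (ℕ × ℕ) :=
  {p | p.1 + 1 ≤ Nat.card {z : ℤ // z ∈ P ∧ (p.2 : ℤ) - (p.1 : ℤ) ≤ z}}

/-- The ribbon `K_i`, added at step `σ(i)` of the process. -/
def ribbonK (n H : ℕ) (lam : ℕ → ℕ) (σ : Equiv.Perm (Fin n)) (i : Fin n) : Set (ℕ × ℕ) :=
  diagOf (Pstep n H lam σ ((σ i : ℕ) + 1)) \ diagOf (Pstep n H lam σ (σ i : ℕ))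

namespace RibbonAux

/-- Count of particles `≥ x` at step `k`. -/
def Fcnt (n H : ℕ) (lam : ℕ → ℕ) (σ : Equiv.Perm (Fin n)) (k : ℕ) (x : ℤ) : ℕ :=
  {z : ℤ | z ∈ Pstep n H lam σ k ∧ x ≤ z}.ncard

variable (n H : ℕ) (lam : ℕ → ℕ) (σ : Equiv.Perm (Fin n))

lemma Fcnt_eq_card (k : ℕ) (x : ℤ) :
    Nat.card {z : ℤ // z ∈ Pstep n H lam σ k ∧ x ≤ z} = Fcnt n H lam σ k x :=
  Nat.card_coe_set_eq {z : ℤ | z ∈ Pstep n H lam σ k ∧ x ≤ z}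

lemma Pstep_le (hlam : Antitone lam) (hH : lam 0 + n ≤ H) (k : ℕ) :
    ∀ z ∈ Pstep n H lam σ k, z ≤ (H : ℤ) - 1 := by
  intro z hz
  simp only [Pstep, Set.mem_setOf_eq] at hz
  obtain ⟨t, rfl, ht⟩ | ⟨j, hj, rfl⟩ := hz
  · have h0 : lam t ≤ lam 0 := hlam (Nat.zero_le t)
    omega
  · omega

lemma Sfin (hlam : Antitone lam) (hH : lam 0 + n ≤ H) (k : ℕ) (x : ℤ) :
    {z : ℤ | z ∈ Pstep n H lam σ k ∧ x ≤ z}.Finite :=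
  (Set.finite_Icc x ((H : ℤ) - 1)).subset fun z hz =>
    ⟨hz.2, Pstep_le n H lam σ hlam hH k z hz.1⟩

lemma mem_diag_iff (k : ℕ) (a b : ℕ) :
    (a, b) ∈ diagOf (Pstep n H lam σ k) ↔ a + 1 ≤ Fcnt n H lam σ k ((b : ℤ) - (a : ℤ)) := by
  rw [diagOf, Set.mem_setOf_eq, Fcnt_eq_card]

lemma mem_ribbonK_iff (i : Fin n) (a b : ℕ) :
    (a, b) ∈ ribbonK n H lam σ i ↔
      (a + 1 ≤ Fcnt n H lam σ ((σ i : ℕ) + 1) ((b : ℤ) - (a : ℤ)) ∧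
        ¬ (a + 1 ≤ Fcnt n H lam σ (σ i : ℕ) ((b : ℤ) - (a : ℤ)))) := by
  rw [ribbonK, Set.mem_diff, mem_diag_iff, mem_diag_iff]

/-- The step relation: for `λ_i - i - 1 < x ≤ H - σ i - 1`, the jump at step `σ i`
adds exactly one particle `≥ x`. -/
lemma Fcnt_step (hlam : Antitone lam) (hH : lam 0 + n ≤ H) (i : Fin n) (x : ℤ)
    (hx1 : (lam i : ℤ) - (((i : ℕ) : ℤ) + 1) < x) (hx2 : x ≤ (H : ℤ) - ((σ i : ℕ) : ℤ) - 1) :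
    Fcnt n H lam σ ((σ i : ℕ) + 1) x = Fcnt n H lam σ (σ i : ℕ) x + 1 := by
  set k := (σ i : ℕ) with hk
  have hkn : k < n := (σ i).isLt
  have hset : {z : ℤ | z ∈ Pstep n H lam σ (k + 1) ∧ x ≤ z}
      = insert ((H : ℤ) - (k : ℤ) - 1) {z : ℤ | z ∈ Pstep n H lam σ k ∧ x ≤ z} := by
    ext z
    simp only [Pstep, Set.mem_setOf_eq, Set.mem_insert_iff]
    constructor
    · rintro ⟨⟨t, rfl, ht⟩ | ⟨j, hj, rfl⟩, hxz⟩
      · exact Or.inr ⟨Or.inl ⟨t, rfl, fun h => by have := ht h; omega⟩, hxz⟩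
      · rcases Nat.lt_succ_iff_lt_or_eq.mp hj with hj' | rfl
        · exact Or.inr ⟨Or.inr ⟨j, hj', rfl⟩, hxz⟩
        · left; push_cast; ring
    · rintro (rfl | ⟨⟨t, rfl, ht⟩ | ⟨j, hj, rfl⟩, hxz⟩)
      · refine ⟨Or.inr ⟨k, Nat.lt_succ_self k, by push_cast; ring⟩, by omega⟩
      · refine ⟨Or.inl ⟨t, rfl, fun h => ?_⟩, hxz⟩
        have ht' := ht h
        rcases Nat.lt_or_ge (σ ⟨t, h⟩ : ℕ) (k + 1) with h1 | h1
        · have hσeq : σ ⟨t, h⟩ = σ i := Fin.ext (by omega)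
          have hti : (⟨t, h⟩ : Fin n) = i := σ.injective hσeq
          have hteq : t = (i : ℕ) := congrArg Fin.val hti
          subst hteq
          omega
        · omega
      · exact ⟨Or.inr ⟨j, Nat.lt_succ_of_lt hj, rfl⟩, hxz⟩
  have hnotmem : ((H : ℤ) - (k : ℤ) - 1) ∉ {z : ℤ | z ∈ Pstep n H lam σ k ∧ x ≤ z} := by
    rintro ⟨hz, -⟩
    simp only [Pstep, Set.mem_setOf_eq] at hz
    obtain ⟨t, ht1, ht2⟩ | ⟨j, hj, hj2⟩ := hz
    · have h0 : lam t ≤ lam 0 := hlam (Nat.zero_le t)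
      omega
    · omega
  rw [Fcnt, Fcnt, hset, Set.ncard_insert_of_notMem hnotmem (Sfin n H lam σ hlam hH k x)]

/-- Occupied position: the count drops by one. -/
lemma Fcnt_occ (hlam : Antitone lam) (hH : lam 0 + n ≤ H) (k : ℕ) (c : ℤ)
    (hc : c ∈ Pstep n H lam σ k) :
    Fcnt n H lam σ k c = Fcnt n H lam σ k (c + 1) + 1 := by
  have hset : {z : ℤ | z ∈ Pstep n H lam σ k ∧ c ≤ z}
      = insert c {z : ℤ | z ∈ Pstep n H lam σ k ∧ c + 1 ≤ z} := by
    ext z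
    simp only [Set.mem_setOf_eq, Set.mem_insert_iff]
    constructor
    · rintro ⟨hz, hcz⟩
      rcases eq_or_lt_of_le hcz with rfl | h
      · exact Or.inl rfl
      · exact Or.inr ⟨hz, by omega⟩
    · rintro (rfl | ⟨hz, hcz⟩)
      · exact ⟨hc, le_rfl⟩
      · exact ⟨hz, by omega⟩
  have hnm : c ∉ {z : ℤ | z ∈ Pstep n H lam σ k ∧ c + 1 ≤ z} := by
    rintro ⟨-, h⟩; omega
  rw [Fcnt, Fcnt, hset, Set.ncard_insert_of_notMem hnm (Sfin n H lam σ hlam hH k (c + 1))]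

/-- Empty position: the count is unchanged. -/
lemma Fcnt_emp (k : ℕ) (c : ℤ) (hc : c ∉ Pstep n H lam σ k) :
    Fcnt n H lam σ k c = Fcnt n H lam σ k (c + 1) := by
  have hset : {z : ℤ | z ∈ Pstep n H lam σ k ∧ c ≤ z}
      = {z : ℤ | z ∈ Pstep n H lam σ k ∧ c + 1 ≤ z} := by
    ext z
    simp only [Set.mem_setOf_eq]
    constructor
    · rintro ⟨hz, hcz⟩
      rcases eq_or_lt_of_le hcz with rfl | h
      · exact absurd hz hc
      · exact ⟨hz, by omega⟩
    · rintro ⟨hz, hcz⟩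
      exact ⟨hz, by omega⟩
  rw [Fcnt, Fcnt, hset]

/-- Characterization of occupied positions in the relevant range. -/
lemma mem_Pstep_iff (hlam : Antitone lam) (hlamn : ∀ t, n ≤ t → lam t = 0)
    (i : Fin n) (c : ℤ)
    (hc1 : (lam i : ℤ) - (((i : ℕ) : ℤ) + 1) < c) (hc2 : c < (H : ℤ) - ((σ i : ℕ) : ℤ)) :
    c ∈ Pstep n H lam σ (σ i : ℕ) ↔
      ∃ j : Fin n, j < i ∧ σ i < σ j ∧ c = (lam j : ℤ) - (((j : ℕ) : ℤ) + 1) := by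
  constructor
  · intro hc
    simp only [Pstep, Set.mem_setOf_eq] at hc
    obtain ⟨t, rfl, ht⟩ | ⟨j, hj, rfl⟩ := hc
    · have hti : t < (i : ℕ) := by
        by_contra hle
        push_neg at hle
        rcases eq_or_lt_of_le hle with rfl | hlt
        · omega
        · have h1 : lam t ≤ lam i := hlam (by omega)
          omega
      have htn : t < n := lt_trans hti i.isLt
      have hσt := ht htn
      have hne : σ ⟨t, htn⟩ ≠ σ i := fun h => by
        have := congrArg Fin.val (σ.injective h); simp at this; omega
      refine ⟨⟨t, htn⟩, ?_, ?_, rfl⟩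
      · exact hti
      · have : (σ i : ℕ) ≤ (σ ⟨t, htn⟩ : ℕ) := by omega
        have : (σ i : ℕ) < (σ ⟨t, htn⟩ : ℕ) :=
          lt_of_le_of_ne this (fun h => hne (Fin.ext h.symm))
        exact this
    · omega
  · rintro ⟨j, hji, hσ, rfl⟩
    simp only [Pstep, Set.mem_setOf_eq]
    refine Or.inl ⟨(j : ℕ), rfl, fun h => ?_⟩
    have : (⟨(j : ℕ), h⟩ : Fin n) = j := Fin.ext rfl
    rw [this]
    exact Nat.lt_succ_of_lt hσ

/-- Lower bound on the particle count: there are at least `(-x)⁺` particles `≥ x`. -/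
lemma Fcnt_lower (hlam : Antitone lam) (hH : lam 0 + n ≤ H) (k : ℕ) (x : ℤ)
    (hm : (-x).toNat ≤ n) : -x ≤ (Fcnt n H lam σ k x : ℤ) := by
  rcases le_or_gt 0 x with hx | hx
  · have : (0 : ℤ) ≤ (Fcnt n H lam σ k x : ℤ) := Int.natCast_nonneg _
    omega
  set m := (-x).toNat with hmdef
  have hxm : x = -(m : ℤ) := by omega
  -- the injection
  set ψ : ℕ → ℤ := fun t =>
    if h : t < n then
      (if (σ ⟨t, h⟩ : ℕ) < k then (H : ℤ) - ((σ ⟨t, h⟩ : ℕ) : ℤ) - 1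
        else (lam t : ℤ) - ((t : ℤ) + 1))
    else 0 with hψ
  have hmem : ∀ t < m, ψ t ∈ {z : ℤ | z ∈ Pstep n H lam σ k ∧ x ≤ z} := by
    intro t htm
    have htn : t < n := lt_of_lt_of_le htm hm
    have h0 : lam t ≤ lam 0 := hlam (Nat.zero_le t)
    simp only [hψ, dif_pos htn, Set.mem_setOf_eq]
    by_cases hj : (σ ⟨t, htn⟩ : ℕ) < k
    · rw [if_pos hj]
      constructor
      · exact Or.inr ⟨(σ ⟨t, htn⟩ : ℕ), hj, by ring⟩
      · have := (σ ⟨t, htn⟩).isLt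
        omega
    · rw [if_neg hj]
      constructor
      · refine Or.inl ⟨t, rfl, fun h => ?_⟩
        have : (⟨t, h⟩ : Fin n) = ⟨t, htn⟩ := rfl
        rw [this]; omega
      · omega
  have hinj : Set.InjOn ψ (Set.Iio m) := by
    intro t ht t' ht' heq
    have htn : t < n := lt_of_lt_of_le ht hm
    have htn' : t' < n := lt_of_lt_of_le ht' hm
    have h0 : lam t ≤ lam 0 := hlam (Nat.zero_le t)
    have h0' : lam t' ≤ lam 0 := hlam (Nat.zero_le t')
    simp only [hψ, dif_pos htn, dif_pos htn'] at heq
    by_cases hj : (σ ⟨t, htn⟩ : ℕ) < k <;> by_cases hj' : (σ ⟨t', htn'⟩ : ℕ) < k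
    · rw [if_pos hj, if_pos hj'] at heq
      have : (σ ⟨t, htn⟩ : ℕ) = (σ ⟨t', htn'⟩ : ℕ) := by omega
      have := congrArg Fin.val (σ.injective (Fin.ext this))
      simpa using this
    · rw [if_pos hj, if_neg hj'] at heq
      have hb := (σ ⟨t, htn⟩).isLt
      omega
    · rw [if_neg hj, if_pos hj'] at heq
      have hb := (σ ⟨t', htn'⟩).isLt
      omega
    · rw [if_neg hj, if_neg hj'] at heq
      by_contra hne
      rcases Nat.lt_or_ge t t' with hlt | hge
      · have : lam t' ≤ lam t := hlam hlt.le
        omega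
      · have hlt : t' < t := by omega
        have : lam t ≤ lam t' := hlam hlt.le
        omega
  have hsub : (Finset.range m).image ψ ⊆
      (Sfin n H lam σ hlam hH k x).toFinset := by
    intro z hz
    simp only [Finset.mem_image, Finset.mem_range] at hz
    obtain ⟨t, htm, rfl⟩ := hz
    rw [Set.Finite.mem_toFinset]
    exact hmem t htm
  have hcard : ((Finset.range m).image ψ).card = m := by
    rw [Finset.card_image_of_injOn, Finset.card_range]
    intro t ht t' ht' heq
    simp only [Finset.coe_range, Set.mem_Iio] at ht ht'
    exact hinj ht ht' heq
  have hle : m ≤ Fcnt n H lam σ k x := by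
    have h1 := Finset.card_le_card hsub
    rw [hcard] at h1
    rwa [Fcnt, Set.ncard_eq_toFinset_card _ (Sfin n H lam σ hlam hH k x)]
  omega

end RibbonAux

/-- **Lemma (vertical steps of the ribbons `K_i`).** Numbering the boxes of the ribbon
`K_i` from its bottom-left box to its top-right box (so that the box numbered `s` is the
unique box of content `λ_i - i + s`), for `1 ≤ s ≤ h_i - 1` the box numbered `s+1` is the
upper neighbor of the box numbered `s` iff there is `j < i` with `σ(j) > σ(i)` and
`s = λ_j - j - λ_i + i`. -/
theorem ribbon_up_steps (n H : ℕ) (lam : ℕ → ℕ) (hlam : IsPtn lam)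
    (hlamn : ∀ i, n ≤ i → lam i = 0) (hH : lam 0 + n ≤ H) (σ : Equiv.Perm (Fin n)) :
    ∀ i : Fin n, ∀ s : ℕ, 1 ≤ s →
      (s : ℤ) ≤ (H : ℤ) - ((σ i : ℕ) + 1) - (lam i : ℤ) + ((i : ℕ) + 1) - 1 →
      ((∃ a b : ℕ, (a + 1, b) ∈ ribbonK n H lam σ i ∧ (a, b) ∈ ribbonK n H lam σ i ∧
          (b : ℤ) - ((a : ℤ) + 1) = ((lam i : ℤ) - ((i : ℕ) + 1)) + s) ↔
        ∃ j : Fin n, j < i ∧ σ i < σ j ∧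
          (s : ℤ) = ((lam j : ℤ) - ((j : ℕ) + 1)) - ((lam i : ℤ) - ((i : ℕ) + 1))) := by
  obtain ⟨hanti, -⟩ := hlam
  intro i s hs hsle
  have hkn : (σ i : ℕ) < n := (σ i).isLt
  set c : ℤ := (lam i : ℤ) - (((i : ℕ) : ℤ) + 1) + (s : ℤ) with hcdef
  constructor
  · rintro ⟨a, b, hab1, hab2, hcont⟩
    rw [RibbonAux.mem_ribbonK_iff] at hab1 hab2
    have e1 : (b : ℤ) - ((a + 1 : ℕ) : ℤ) = c := by push_cast; push_cast at hcont; omega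
    have e2 : (b : ℤ) - ((a : ℕ) : ℤ) = c + 1 := by push_cast; push_cast at hcont; omega
    rw [e1] at hab1
    rw [e2] at hab2
    rw [RibbonAux.Fcnt_step n H lam σ hanti hH i c (by omega) (by omega)] at hab1
    rw [RibbonAux.Fcnt_step n H lam σ hanti hH i (c + 1) (by omega) (by omega)] at hab2
    obtain ⟨h1a, h1b⟩ := hab1
    obtain ⟨h2a, h2b⟩ := hab2
    have hocc : c ∈ Pstep n H lam σ (σ i : ℕ) := by
      by_contra hnc
      have := RibbonAux.Fcnt_emp n H lam σ (σ i : ℕ) c hnc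
      omega
    rw [RibbonAux.mem_Pstep_iff n H lam σ hanti hlamn i c (by omega) (by omega)] at hocc
    obtain ⟨j, hji, hσj, hcj⟩ := hocc
    exact ⟨j, hji, hσj, by omega⟩
  · rintro ⟨j, hji, hσj, hsj⟩
    have hcj : c = (lam j : ℤ) - (((j : ℕ) : ℤ) + 1) := by omega
    have hocc : c ∈ Pstep n H lam σ (σ i : ℕ) := by
      rw [RibbonAux.mem_Pstep_iff n H lam σ hanti hlamn i c (by omega) (by omega)]
      exact ⟨j, hji, hσj, hcj⟩
    have hoccF := RibbonAux.Fcnt_occ n H lam σ hanti hH (σ i : ℕ) c hocc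
    have hjn : (j : ℕ) < n := j.isLt
    have hlow := RibbonAux.Fcnt_lower n H lam σ hanti hH (σ i : ℕ) (c + 1) (by omega)
    set a := RibbonAux.Fcnt n H lam σ (σ i : ℕ) (c + 1) with ha
    obtain ⟨b, hbval⟩ : ∃ b : ℕ, (b : ℤ) = (a : ℤ) + c + 1 := ⟨((a : ℤ) + c + 1).toNat, by omega⟩
    refine ⟨a, b, ?_, ?_, by omega⟩
    · rw [RibbonAux.mem_ribbonK_iff]
      have e1 : (b : ℤ) - ((a + 1 : ℕ) : ℤ) = c := by push_cast; omega
      rw [e1, RibbonAux.Fcnt_step n H lam σ hanti hH i c (by omega) (by omega)]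
      omega
    · rw [RibbonAux.mem_ribbonK_iff]
      have e2 : (b : ℤ) - ((a : ℕ) : ℤ) = c + 1 := by push_cast; omega
      rw [e2, RibbonAux.Fcnt_step n H lam σ hanti hH i (c + 1) (by omega) (by omega)]
      omega

end
end
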